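/- For subsets A, B of F_p and λ, μ ∈ F_p^*, the sum over all (a,b) ∈ F_p^2 of (ι(ℓ_{λa,μb}) − |A||B|/p)² is at most p·|A|·|B|. -/

import Mathlib

open Finset

/-- Incidence count: number of points of `A × B` on the line `y = a x + b`. -/
def inc {p : ℕ} [Fact p.Prime] (A B : Finset (ZMod p)) (a b : ZMod p) : ℕ :=
  ((A ×ˢ B).filter (fun xy => xy.2 = a * xy.1 + b)).card

lemma sum_inc_eq {p : ℕ} [Fact p.Prime] (A B : Finset (ZMod p)) (a : ZMod p) :
    ∑ b : ZMod p, inc A B a b = A.card * B.card := by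
  have h : ∀ b, inc A B a b
      = ((A ×ˢ B).filter (fun P => P.2 - a * P.1 = b)).card := by
    intro b
    unfold inc
    congr 1
    apply Finset.filter_congr
    intro P _
    rw [sub_eq_iff_eq_add']
  simp_rw [h]
  rw [← Finset.card_eq_sum_card_fiberwise (fun P _ => Finset.mem_univ (P.2 - a * P.1)),
    Finset.card_product]

lemma count_ab_le {p : ℕ} [Fact p.Prime] (P Q : ZMod p × ZMod p) :
    ((Finset.univ : Finset (ZMod p × ZMod p)).filter
      (fun ab => P.2 = ab.1 * P.1 + ab.2 ∧ Q.2 = ab.1 * Q.1 + ab.2)).card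
      ≤ if P = Q then p else 1 := by
  split_ifs with hPQ
  · calc ((Finset.univ : Finset (ZMod p × ZMod p)).filter _).card
        ≤ (Finset.univ : Finset (ZMod p)).card := by
          apply Finset.card_le_card_of_injOn Prod.fst (fun _ _ => Finset.mem_univ _)
          intro ab hab ab' hab' h
          simp only [Finset.coe_filter, Set.mem_setOf_eq, Finset.mem_univ, true_and] at hab hab'
          have h2 : ab.2 = ab'.2 := by
            linear_combination hab'.1 - hab.1 - P.1 * h
          exact Prod.ext h h2
      _ = p := by simp [ZMod.card]
  · rw [Finset.card_le_one]
    intro ab hab ab' hab'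
    simp only [Finset.mem_filter, Finset.mem_univ, true_and] at hab hab'
    obtain ⟨h1, h2⟩ := hab
    obtain ⟨h1', h2'⟩ := hab'
    have hx : P.1 ≠ Q.1 := by
      intro hx
      apply hPQ
      have hy : P.2 = Q.2 := by rw [h1, h2, hx]
      exact Prod.ext hx hy
    have ha : ab.1 = ab'.1 := by
      have e1 : ab.1 * (P.1 - Q.1) = P.2 - Q.2 := by linear_combination h2 - h1
      have e2 : ab'.1 * (P.1 - Q.1) = P.2 - Q.2 := by linear_combination h2' - h1'
      exact mul_right_cancel₀ (sub_ne_zero.mpr hx) (e1.trans e2.symm)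
    have hb : ab.2 = ab'.2 := by linear_combination h1' - h1 - P.1 * ha
    exact Prod.ext ha hb

lemma sum_inc_sq_le {p : ℕ} [Fact p.Prime] (A B : Finset (ZMod p)) :
    ∑ a : ZMod p, ∑ b : ZMod p, inc A B a b ^ 2
      ≤ p * (A.card * B.card) + (A.card * B.card) ^ 2 := by
  set S := A ×ˢ B with hS
  have hsq : ∀ a b : ZMod p, inc A B a b ^ 2
      = ((S ×ˢ S).filter (fun PQ =>
          PQ.1.2 = a * PQ.1.1 + b ∧ PQ.2.2 = a * PQ.2.1 + b)).card := by
    intro a b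
    rw [sq]
    unfold inc
    rw [← Finset.card_product]
    congr 1
    exact (Finset.filter_product (fun xy : ZMod p × ZMod p => xy.2 = a * xy.1 + b)
      (fun xy : ZMod p × ZMod p => xy.2 = a * xy.1 + b)).symm
  simp_rw [hsq, Finset.card_filter]
  calc ∑ a : ZMod p, ∑ b : ZMod p, ∑ PQ ∈ S ×ˢ S,
        (if PQ.1.2 = a * PQ.1.1 + b ∧ PQ.2.2 = a * PQ.2.1 + b then 1 else 0)
      = ∑ a : ZMod p, ∑ PQ ∈ S ×ˢ S, ∑ b : ZMod p,
        (if PQ.1.2 = a * PQ.1.1 + b ∧ PQ.2.2 = a * PQ.2.1 + b then 1 else 0) :=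
        Finset.sum_congr rfl (fun a _ => Finset.sum_comm)
    _ = ∑ PQ ∈ S ×ˢ S, ∑ a : ZMod p, ∑ b : ZMod p,
        (if PQ.1.2 = a * PQ.1.1 + b ∧ PQ.2.2 = a * PQ.2.1 + b then 1 else 0) :=
        Finset.sum_comm
    _ ≤ ∑ PQ ∈ S ×ˢ S, (if PQ.1 = PQ.2 then p else 1) := by
        apply Finset.sum_le_sum
        intro PQ _
        have h := count_ab_le PQ.1 PQ.2
        rw [Finset.card_filter, Fintype.sum_prod_type] at h
        exact h
    _ ≤ ∑ PQ ∈ S ×ˢ S, ((if PQ.1 = PQ.2 then p else 0) + 1) := by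
        apply Finset.sum_le_sum
        intro PQ _
        split_ifs <;> omega
    _ = (∑ PQ ∈ S ×ˢ S, (if PQ.1 = PQ.2 then p else 0)) + S.card ^ 2 := by
        rw [Finset.sum_add_distrib, Finset.sum_const, Finset.card_product, smul_eq_mul,
          mul_one, sq]
    _ ≤ p * (A.card * B.card) + (A.card * B.card) ^ 2 := by
        have hdiag : (∑ PQ ∈ S ×ˢ S, (if PQ.1 = PQ.2 then p else 0)) = S.card * p := by
          rw [Finset.sum_product]
          have h : ∀ P ∈ S, (∑ Q ∈ S, if P = Q then p else 0) = p := by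
            intro P hP
            rw [Finset.sum_ite_eq S P (fun _ => p), if_pos hP]
          rw [Finset.sum_congr rfl h, Finset.sum_const, smul_eq_mul]
        rw [hdiag, hS, Finset.card_product]
        ring_nf
        omega

/-- `∑_{(a,b)} (ι(ℓ_{λa,μb}) − AB/p)² ≤ pAB`. -/
theorem sum_inc_dev_sq_le (p : ℕ) [Fact p.Prime] (A B : Finset (ZMod p))
    (lam mu : ZMod p) (hlam : lam ≠ 0) (hmu : mu ≠ 0) :
    ∑ a : ZMod p, ∑ b : ZMod p,
        ((inc A B (lam * a) (mu * b) : ℝ) - (A.card : ℝ) * B.card / p) ^ 2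
      ≤ (p : ℝ) * A.card * B.card := by
  have hp : (p : ℝ) ≠ 0 := Nat.cast_ne_zero.mpr (Fact.out (p := p.Prime)).ne_zero
  set c : ℝ := (A.card : ℝ) * B.card / p with hc
  set K : ℝ := (A.card : ℝ) * B.card with hK
  have hre : ∑ a : ZMod p, ∑ b : ZMod p,
      ((inc A B (lam * a) (mu * b) : ℝ) - c) ^ 2
      = ∑ a : ZMod p, ∑ b : ZMod p, ((inc A B a b : ℝ) - c) ^ 2 :=
    calc ∑ a : ZMod p, ∑ b : ZMod p, ((inc A B (lam * a) (mu * b) : ℝ) - c) ^ 2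
        = ∑ a : ZMod p, ∑ b : ZMod p, ((inc A B a (mu * b) : ℝ) - c) ^ 2 :=
          Equiv.sum_comp (Equiv.mulLeft₀ lam hlam)
            (fun a => ∑ b : ZMod p, ((inc A B a (mu * b) : ℝ) - c) ^ 2)
      _ = ∑ a : ZMod p, ∑ b : ZMod p, ((inc A B a b : ℝ) - c) ^ 2 :=
          Finset.sum_congr rfl (fun a _ =>
            Equiv.sum_comp (Equiv.mulLeft₀ mu hmu)
              (fun b => ((inc A B a b : ℝ) - c) ^ 2))
  rw [hre]
  have hsum : ∑ a : ZMod p, ∑ b : ZMod p, (inc A B a b : ℝ) = p * K := by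
    have h : ∀ a : ZMod p, ∑ b : ZMod p, (inc A B a b : ℝ) = K := by
      intro a
      rw [← Nat.cast_sum, sum_inc_eq A B a]
      push_cast [hK]
      ring
    rw [Finset.sum_congr rfl (fun a _ => h a), Finset.sum_const, Finset.card_univ,
      ZMod.card, nsmul_eq_mul]
  have hsq : ∑ a : ZMod p, ∑ b : ZMod p, ((inc A B a b : ℝ)) ^ 2 ≤ (p : ℝ) * K + K ^ 2 := by
    have h := sum_inc_sq_le A B
    have h2 := (Nat.cast_le (α := ℝ)).mpr h
    push_cast at h2
    rw [hK]
    linarith [h2]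
  have hexp : ∑ a : ZMod p, ∑ b : ZMod p, ((inc A B a b : ℝ) - c) ^ 2
      = (∑ a : ZMod p, ∑ b : ZMod p, ((inc A B a b : ℝ)) ^ 2)
        - 2 * c * (∑ a : ZMod p, ∑ b : ZMod p, (inc A B a b : ℝ))
        + (p : ℝ) ^ 2 * c ^ 2 := by
    have expand : ∀ x : ℝ, (x - c) ^ 2 = x ^ 2 - 2 * c * x + c ^ 2 := fun x => by ring
    simp_rw [expand, Finset.sum_add_distrib, Finset.sum_sub_distrib, ← Finset.mul_sum,
      Finset.sum_const, Finset.card_univ, ZMod.card, nsmul_eq_mul]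
    ring
  rw [hexp, hsum]
  have e1 : (p : ℝ) ^ 2 * c ^ 2 = K ^ 2 := by
    rw [hc, hK]
    field_simp
  have e2 : 2 * c * ((p : ℝ) * K) = 2 * K ^ 2 := by
    rw [hc, hK]
    field_simp
  have e3 : (p : ℝ) * A.card * B.card = (p : ℝ) * K := by rw [hK]; ring
  rw [e1, e2, e3]
  linarith [hsq]
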